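/- arXiv:2509.12943 — 2 statements merged into one kernel-verified Lean document; each statement's English description precedes it below -/
import Mathlib

section
/- Let a, b, c be real numbers satisfying b² − a·b − c = 1 and (a − b)² < 4, and let M be the 3×3 real matrix with rows (0, 1, 0), (0, 0, 1), (b, c, a). Then, viewing M as a complex matrix, there exists an eigenvalue λ ∈ ℂ of M (a root of its characteristic polynomial over ℂ) with λ.im ≠ 0 and |λ| = 1; moreover conj λ is also an eigenvalue of M. -/
open Polynomial

lemma charpoly_eval_fin3 (N : Matrix (Fin 3) (Fin 3) ℂ) (x : ℂ) :
    N.charpoly.eval x = (x - N 0 0) * ((x - N 1 1) * (x - N 2 2) - (-N 1 2) * (-N 2 1))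
      - (-N 0 1) * ((-N 1 0) * (x - N 2 2) - (-N 1 2) * (-N 2 0))
      + (-N 0 2) * ((-N 1 0) * (-N 2 1) - (x - N 1 1) * (-N 2 0)) := by
  have hd := RingHom.map_det (evalRingHom x) N.charmatrix
  rw [Matrix.charpoly,
    show Polynomial.eval x N.charmatrix.det = (evalRingHom x) N.charmatrix.det from rfl, hd,
    Matrix.det_fin_three]
  simp [Matrix.charmatrix_apply, Matrix.map_apply]
  ring

/-- On the Neimark–Sacker set `b² − ab − c = 1` with `(a − b)² < 4`, the Mira
Jacobian `!![0,1,0; 0,0,1; b,c,a]`, viewed as a complex matrix, has an eigenvalue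
`λ` (root of its characteristic polynomial over `ℂ`) with `λ.im ≠ 0` and `|λ| = 1`,
and `conj λ` is also an eigenvalue. -/
theorem mira_jacobian_neimark_sacker_eigenvalues (a b c : ℝ)
    (h : b ^ 2 - a * b - c = 1) (h' : (a - b) ^ 2 < 4)
    (M : Matrix (Fin 3) (Fin 3) ℝ) (hM : M = !![0, 1, 0; 0, 0, 1; b, c, a]) :
    ∃ l : ℂ, l.im ≠ 0 ∧ ‖l‖ = 1 ∧
      ((M.map (Complex.ofReal)).charpoly).IsRoot l ∧
      ((M.map (Complex.ofReal)).charpoly).IsRoot ((starRingEnd ℂ) l) := by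
  subst hM
  obtain ⟨t, rfl⟩ : ∃ t : ℝ, a = b + 2 * t := ⟨(a - b) / 2, by ring⟩
  obtain rfl : c = -(2 * t * b) - 1 := by linear_combination -h
  have ht2 : t ^ 2 < 1 := by nlinarith [h']
  set s : ℝ := Real.sqrt (1 - t ^ 2) with hs
  have hs2 : s ^ 2 = 1 - t ^ 2 := Real.sq_sqrt (by linarith)
  have hspos : 0 < s := Real.sqrt_pos.mpr (by linarith)
  refine ⟨⟨t, s⟩, by simpa using hspos.ne', ?_, ?_, ?_⟩
  · have hn : Complex.normSq ⟨t, s⟩ = 1 := by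
      simp only [Complex.normSq_mk]; nlinarith
    rw [Complex.norm_def, hn, Real.sqrt_one]
  all_goals {
    rw [Polynomial.IsRoot, charpoly_eval_fin3]
    simp only [Matrix.map_apply, Matrix.cons_val', Matrix.cons_val_zero, Matrix.cons_val_one,
      Matrix.head_cons, Matrix.empty_val', Matrix.cons_val_fin_one, Matrix.head_fin_const,
      Matrix.cons_val_two, Matrix.tail_cons, Complex.ofReal_zero, Complex.ofReal_one]
    rw [Complex.ext_iff]
    constructor <;>
      simp [Complex.mul_re, Complex.mul_im, Complex.sub_re, Complex.sub_im] <;>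
      first
        | linear_combination (b - t) * hs2
        | linear_combination (t - b) * hs2
        | linear_combination s * hs2
        | linear_combination (-s) * hs2
  }
end

section
/- Let f : X → X be a map, let A, B ⊆ X be disjoint sets with f(A) ⊆ B and f(B) ⊆ A, and let x₀ ∈ A be a periodic point of f whose minimal period equals 2·p for some natural number p ≥ 1. Suppose there is a function π : X → Y (the angular position along the original invariant curve) such that π(f^[n + p](x₀)) = π(f^[n](x₀)) for every natural number n, and such that any two points u, v of the forward orbit {f^[n](x₀) | n ∈ ℕ} satisfying π(u) = π(v) and (u ∈ A ↔ v ∈ A) are equal. Then p is odd. -/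
/-- If two disjoint sets `A`, `B` are swapped by `f`, a point `x₀ ∈ A` has minimal
period `2p`, and there is an angular-position function `π` that is `p`-periodic
along the orbit of `x₀` and, together with membership in `A`, separates orbit
points, then `p` is odd.  (A resonant invariant curve whose cycle has even period
cannot undergo loop doubling.) -/
theorem odd_period_of_loop_doubling {X Y : Type*} (f : X → X) (A B : Set X)
    (hdisj : Disjoint A B) (hAB : f '' A ⊆ B) (hBA : f '' B ⊆ A)
    (x₀ : X) (hx₀ : x₀ ∈ A) (p : ℕ) (hp : 1 ≤ p)
    (hper : Function.minimalPeriod f x₀ = 2 * p)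
    (π : X → Y)
    (hπper : ∀ n : ℕ, π (f^[n + p] x₀) = π (f^[n] x₀))
    (hsep : ∀ u v : X, (∃ n : ℕ, f^[n] x₀ = u) → (∃ n : ℕ, f^[n] x₀ = v) →
      π u = π v → (u ∈ A ↔ v ∈ A) → u = v) :
    Odd p := by
  -- orbit alternates: even iterates in A, odd iterates in B
  have halt : ∀ n : ℕ, (Even n → f^[n] x₀ ∈ A) ∧ (Odd n → f^[n] x₀ ∈ B) := by
    intro n
    induction n with
    | zero => exact ⟨fun _ => hx₀, fun h => absurd h (by simp)⟩
    | succ n ih =>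
      constructor
      · intro h
        have hn : Odd n := by
          rcases Nat.even_or_odd n with he | ho
          · exact (Nat.even_add_one.mp h he).elim
          · exact ho
        rw [Function.iterate_succ_apply']
        exact hBA ⟨_, ih.2 hn, rfl⟩
      · intro h
        have hn : Even n := by
          rcases Nat.even_or_odd n with he | ho
          · exact he
          · exact (Nat.odd_add_one.mp h ho).elim
        rw [Function.iterate_succ_apply']
        exact hAB ⟨_, ih.1 hn, rfl⟩
  by_contra hodd
  have hpeven : Even p := Nat.not_odd_iff_even.mp hodd
  have hkey : f^[p] x₀ = x₀ := by
    apply hsep _ _ ⟨p, rfl⟩ ⟨0, rfl⟩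
    · simpa using hπper 0
    · constructor
      · intro _; exact hx₀
      · intro _; exact (halt p).1 hpeven
  have : Function.minimalPeriod f x₀ ∣ p :=
    Function.IsPeriodicPt.minimalPeriod_dvd hkey
  rw [hper] at this
  have := Nat.le_of_dvd (by omega) this
  omega
end
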